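/- Let n, d ≥ 1, let F be a unitary matrix on ℂ^{2^n} ⊗ ℂ^d (a matrix indexed by pairs (system index, environment index)), and let e ∈ ℂ^d be a unit vector. Define the channel Λ on 2^n × 2^n matrices by Λ(ρ) := Tr_E[ F · (ρ ⊗ e·e†) · F† ], where Tr_E is the partial trace over the environment: (Tr_E M)(x, y) = ∑_{a ∈ Fin d} M((x,a), (y,a)). Then the Pauli twirl of Λ is a Pauli channel: there exists c : (Fin n → Fin 4) → ℝ with c(g) ≥ 0 for all g and ∑_g c(g) = 1 such that for every 2^n × 2^n complex matrix ρ, (1/4^n) ∑_{f} P_f · Λ(P_f · ρ · P_f) · P_f = ∑_g c(g) • (P_g · ρ · P_g). (The core of Lemma 1: averaging over the quantum one-time pad reduces arbitrary noise, given by a unitary dilation on system plus environment, to a probabilistic mixture of Pauli errors.) -/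

import Mathlib

open Matrix Kronecker

/-- The four single-qubit Pauli matrices I, X, Y, Z. -/
noncomputable def pauli : Fin 4 → Matrix (Fin 2) (Fin 2) ℂ :=
  ![!![1, 0; 0, 1], !![0, 1; 1, 0], !![0, -Complex.I; Complex.I, 0], !![1, 0; 0, -1]]

/-- The `n`-qubit Pauli string `⊗ᵢ σ_{f i}`. -/
noncomputable def PauliString (n : ℕ) (f : Fin n → Fin 4) :
    Matrix (Fin n → Fin 2) (Fin n → Fin 2) ℂ :=
  Matrix.of fun x y => ∏ i, pauli (f i) (x i) (y i)

/-- Partial trace over the environment `Fin d`. -/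
noncomputable def trEnv (n d : ℕ)
    (M : Matrix ((Fin n → Fin 2) × Fin d) ((Fin n → Fin 2) × Fin d) ℂ) :
    Matrix (Fin n → Fin 2) (Fin n → Fin 2) ℂ :=
  Matrix.of fun x y => ∑ a : Fin d, M (x, a) (y, a)

/-- The noise channel `Λ(ρ) = Tr_E[F (ρ ⊗ e e†) F†]` given by a unitary dilation `F`
on system plus environment with environment state `e`. -/
noncomputable def noiseChannel (n d : ℕ)
    (F : Matrix ((Fin n → Fin 2) × Fin d) ((Fin n → Fin 2) × Fin d) ℂ)
    (e : Fin d → ℂ) (ρ : Matrix (Fin n → Fin 2) (Fin n → Fin 2) ℂ) :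
    Matrix (Fin n → Fin 2) (Fin n → Fin 2) ℂ :=
  trEnv n d (F * (ρ ⊗ₖ Matrix.vecMulVec e (star e)) * Fᴴ)

/-! ### Auxiliary material: single-qubit Pauli algebra -/

/-- Conjugation sign: `σ_a σ_b σ_a = eps a b • σ_b`. -/
noncomputable def eps (a b : Fin 4) : ℂ := if a = 0 ∨ b = 0 ∨ a = b then 1 else -1

lemma pauli_conj (a b : Fin 4) : pauli a * pauli b * pauli a = eps a b • pauli b := by
  fin_cases a <;> fin_cases b <;>
    · ext i j
      fin_cases i <;> fin_cases j <;>
        simp [pauli, eps, Matrix.mul_apply, Fin.sum_univ_two, Complex.ext_iff] <;> norm_num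

lemma eps_orth (g h : Fin 4) : ∑ a : Fin 4, eps a g * eps a h = if g = h then 4 else 0 := by
  fin_cases g <;> fin_cases h <;> simp [eps, Fin.sum_univ_four] <;> norm_num

lemma pauli_trace_mul (a b : Fin 4) : (pauli a * pauli b).trace = if a = b then 2 else 0 := by
  fin_cases a <;> fin_cases b <;>
    simp [pauli, Matrix.trace, Matrix.mul_apply, Fin.sum_univ_two, Matrix.diag] <;> norm_num

lemma pauli_herm (a : Fin 4) : (pauli a)ᴴ = pauli a := by
  fin_cases a <;>
    · ext i j
      fin_cases i <;> fin_cases j <;> simp [pauli, Matrix.conjTranspose_apply]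

lemma star_eps (a b : Fin 4) : star (eps a b) = eps a b := by
  unfold eps; split <;> simp

/-! ### Tensor strings -/

/-- The `n`-fold tensor (Kronecker) product of a family of `2 × 2` matrices. -/
noncomputable def tens (n : ℕ) (M : Fin n → Matrix (Fin 2) (Fin 2) ℂ) :
    Matrix (Fin n → Fin 2) (Fin n → Fin 2) ℂ :=
  Matrix.of fun x y => ∏ i, M i (x i) (y i)

lemma tens_mul (n : ℕ) (M N : Fin n → Matrix (Fin 2) (Fin 2) ℂ) :
    tens n M * tens n N = tens n (fun i => M i * N i) := by
  ext x y
  simp only [tens, Matrix.mul_apply, Matrix.of_apply]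
  rw [show (∑ z : Fin n → Fin 2, (∏ i, M i (x i) (z i)) * ∏ i, N i (z i) (y i))
      = ∑ z : Fin n → Fin 2, ∏ i, M i (x i) (z i) * N i (z i) (y i) from
    Finset.sum_congr rfl fun z _ => (Finset.prod_mul_distrib).symm,
    ← Fintype.prod_sum (fun i c => M i (x i) c * N i c (y i))]

lemma tens_smul (n : ℕ) (c : Fin n → ℂ) (M : Fin n → Matrix (Fin 2) (Fin 2) ℂ) :
    tens n (fun i => c i • M i) = (∏ i, c i) • tens n M := by
  ext x y
  simp [tens, Finset.prod_mul_distrib]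

lemma tens_conjTranspose (n : ℕ) (M : Fin n → Matrix (Fin 2) (Fin 2) ℂ) :
    (tens n M)ᴴ = tens n (fun i => (M i)ᴴ) := by
  ext x y
  simp only [tens, Matrix.conjTranspose_apply, Matrix.of_apply, starRingEnd_apply]
  exact star_prod _ _

lemma tens_trace (n : ℕ) (M : Fin n → Matrix (Fin 2) (Fin 2) ℂ) :
    (tens n M).trace = ∏ i, (M i).trace := by
  simp only [Matrix.trace, Matrix.diag, tens, Matrix.of_apply]
  rw [Fintype.prod_sum (fun i c => M i c c)]

/-! ### Pauli strings -/

lemma PauliString_eq_tens (n : ℕ) (f : Fin n → Fin 4) :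
    PauliString n f = tens n (fun i => pauli (f i)) := rfl

/-- Conjugation sign for Pauli strings. -/
noncomputable def Eps (n : ℕ) (f g : Fin n → Fin 4) : ℂ := ∏ i, eps (f i) (g i)

lemma P_conj (n : ℕ) (f g : Fin n → Fin 4) :
    PauliString n f * PauliString n g * PauliString n f
      = Eps n f g • PauliString n g := by
  simp only [PauliString_eq_tens, tens_mul]
  rw [show (fun i => pauli (f i) * pauli (g i) * pauli (f i))
      = fun i => eps (f i) (g i) • pauli (g i) from funext fun i => pauli_conj _ _,
    tens_smul]
  rfl

lemma Eps_orth (n : ℕ) (g h : Fin n → Fin 4) :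
    ∑ f : Fin n → Fin 4, Eps n f g * Eps n f h = if g = h then (4 : ℂ) ^ n else 0 := by
  unfold Eps
  rw [show (∑ f : Fin n → Fin 4, (∏ i, eps (f i) (g i)) * ∏ i, eps (f i) (h i))
      = ∑ f : Fin n → Fin 4, ∏ i, eps (f i) (g i) * eps (f i) (h i) from
    Finset.sum_congr rfl fun f _ => (Finset.prod_mul_distrib).symm,
    ← Fintype.prod_sum (fun i a => eps a (g i) * eps a (h i))]
  by_cases hgh : g = h
  · subst hgh
    simp [eps_orth]
  · obtain ⟨i, hi⟩ := Function.ne_iff.mp hgh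
    rw [if_neg hgh]
    apply Finset.prod_eq_zero (Finset.mem_univ i)
    rw [eps_orth, if_neg hi]

lemma P_herm (n : ℕ) (g : Fin n → Fin 4) : (PauliString n g)ᴴ = PauliString n g := by
  simp only [PauliString_eq_tens, tens_conjTranspose]
  exact congrArg _ (funext fun i => pauli_herm _)

lemma P_trace_mul (n : ℕ) (g h : Fin n → Fin 4) :
    (PauliString n g * PauliString n h).trace = if g = h then (2 : ℂ) ^ n else 0 := by
  simp only [PauliString_eq_tens, tens_mul, tens_trace, pauli_trace_mul]
  by_cases hgh : g = h
  · subst hgh; simp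
  · obtain ⟨i, hi⟩ := Function.ne_iff.mp hgh
    rw [if_neg hgh]
    exact Finset.prod_eq_zero (Finset.mem_univ i) (by rw [if_neg hi])

lemma star_Eps (n : ℕ) (f g : Fin n → Fin 4) : star (Eps n f g) = Eps n f g := by
  unfold Eps
  rw [star_prod]
  exact Finset.prod_congr rfl fun i _ => star_eps _ _

lemma P_linearIndependent (n : ℕ) : LinearIndependent ℂ (PauliString n) := by
  rw [Fintype.linearIndependent_iff]
  intro c hc h
  have H := congrArg (fun M => (M * PauliString n h).trace) hc
  simp only [Finset.sum_smul, Matrix.smul_mul, zero_mul, Matrix.trace_zero,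
    Finset.sum_mul, Matrix.trace_sum, Matrix.trace_smul, P_trace_mul] at H
  rw [Finset.sum_eq_single h] at H
  · simp only [if_pos rfl, smul_eq_mul] at H
    have h2 : (2 : ℂ) ^ n ≠ 0 := pow_ne_zero _ two_ne_zero
    exact (mul_eq_zero.mp H).resolve_right h2
  · intro g _ hg; simp [if_neg hg]
  · intro hh; exact absurd (Finset.mem_univ h) hh

/-- Pauli strings form a basis of the matrix algebra. -/
noncomputable def PBasis (n : ℕ) :
    Module.Basis (Fin n → Fin 4) ℂ (Matrix (Fin n → Fin 2) (Fin n → Fin 2) ℂ) :=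
  basisOfLinearIndependentOfCardEqFinrank (P_linearIndependent n)
    (by
      rw [Module.finrank_matrix, Module.finrank_self, Fintype.card_fun, Fintype.card_fun]
      simp only [Fintype.card_fin]
      rw [show (4:ℕ) = 2^2 by norm_num, ← pow_mul, mul_comm 2 n, Nat.mul_one]
      ring_nf)

lemma PBasis_eq (n : ℕ) (g : Fin n → Fin 4) : PBasis n g = PauliString n g := by
  unfold PBasis
  rw [coe_basisOfLinearIndependentOfCardEqFinrank]

lemma sum_repr (n : ℕ) (M : Matrix (Fin n → Fin 2) (Fin n → Fin 2) ℂ) :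
    ∑ g, (PBasis n).repr M g • PauliString n g = M := by
  conv_rhs => rw [← (PBasis n).sum_repr M]
  exact Finset.sum_congr rfl fun g _ => by rw [PBasis_eq]

/-! ### Kraus representation of the noise channel -/

lemma sum3_comm {α β γ M : Type*} [Fintype α] [Fintype β] [Fintype γ] [AddCommMonoid M]
    (f : γ → α → β → M) :
    ∑ c : γ, ∑ u : α, ∑ b : β, f c u b = ∑ u : α, ∑ b : β, ∑ c : γ, f c u b := by
  rw [Finset.sum_comm]
  exact Finset.sum_congr rfl fun u _ => Finset.sum_comm

lemma sum4_comm {A B C D M : Type*} [Fintype A] [Fintype B] [Fintype C] [Fintype D]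
    [AddCommMonoid M] (f : A → B → C → D → M) :
    ∑ a, ∑ b, ∑ c, ∑ dd, f a b c dd = ∑ dd, ∑ c, ∑ b, ∑ a, f a b c dd :=
  calc ∑ a, ∑ b, ∑ c, ∑ dd, f a b c dd
      = ∑ b, ∑ a, ∑ c, ∑ dd, f a b c dd := Finset.sum_comm
    _ = ∑ b, ∑ c, ∑ a, ∑ dd, f a b c dd :=
        Finset.sum_congr rfl fun _ _ => Finset.sum_comm
    _ = ∑ b, ∑ c, ∑ dd, ∑ a, f a b c dd :=
        Finset.sum_congr rfl fun _ _ => Finset.sum_congr rfl fun _ _ => Finset.sum_comm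
    _ = ∑ b, ∑ dd, ∑ c, ∑ a, f a b c dd :=
        Finset.sum_congr rfl fun _ _ => Finset.sum_comm
    _ = ∑ dd, ∑ b, ∑ c, ∑ a, f a b c dd := Finset.sum_comm
    _ = ∑ dd, ∑ c, ∑ b, ∑ a, f a b c dd :=
        Finset.sum_congr rfl fun _ _ => Finset.sum_comm

/-- Kraus operators of the dilated channel. -/
noncomputable def kraus (n d : ℕ)
    (F : Matrix ((Fin n → Fin 2) × Fin d) ((Fin n → Fin 2) × Fin d) ℂ)
    (e : Fin d → ℂ) (a : Fin d) : Matrix (Fin n → Fin 2) (Fin n → Fin 2) ℂ :=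
  Matrix.of fun x y => ∑ b, F (x, a) (y, b) * e b

lemma noiseChannel_eq_kraus (n d : ℕ)
    (F : Matrix ((Fin n → Fin 2) × Fin d) ((Fin n → Fin 2) × Fin d) ℂ)
    (e : Fin d → ℂ) (ρ : Matrix (Fin n → Fin 2) (Fin n → Fin 2) ℂ) :
    noiseChannel n d F e ρ = ∑ a, kraus n d F e a * ρ * (kraus n d F e a)ᴴ := by
  ext x y
  simp only [noiseChannel, trEnv, Matrix.of_apply, Matrix.sum_apply, Matrix.mul_apply,
    Matrix.conjTranspose_apply, kraus, Matrix.kroneckerMap_apply, Matrix.vecMulVec_apply,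
    Pi.star_apply, Fintype.sum_prod_type, star_sum, star_mul']
  refine Finset.sum_congr rfl fun a _ => ?_
  refine Finset.sum_congr rfl fun v _ => ?_
  simp only [Finset.sum_mul, Finset.mul_sum]
  refine Eq.trans (sum3_comm (M := ℂ) (α := Fin n → Fin 2) (β := Fin d) (γ := Fin d) _) ?_
  refine Eq.trans ?_ (sum3_comm (M := ℂ) (α := Fin n → Fin 2) (β := Fin d) (γ := Fin d) _).symm
  refine Finset.sum_congr rfl fun u _ => ?_
  refine Finset.sum_congr rfl fun b _ => ?_
  refine Finset.sum_congr rfl fun c _ => ?_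
  ring

lemma kraus_tp (n d : ℕ)
    (F : Matrix ((Fin n → Fin 2) × Fin d) ((Fin n → Fin 2) × Fin d) ℂ)
    (hF : F ∈ Matrix.unitaryGroup ((Fin n → Fin 2) × Fin d) ℂ)
    (e : Fin d → ℂ) (he : dotProduct (star e) e = 1) :
    ∑ a, (kraus n d F e a)ᴴ * kraus n d F e a = 1 := by
  have hFF : Fᴴ * F = 1 := (Matrix.mem_unitaryGroup_iff'.mp hF)
  ext u v
  have key : ∀ b c : Fin d,
      (∑ p : (Fin n → Fin 2) × Fin d, star (F p (u, b)) * F p (v, c))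
        = if (u, b) = (v, c) then 1 else 0 := by
    intro b c
    have h2 : (Fᴴ * F) (u, b) (v, c)
        = (1 : Matrix ((Fin n → Fin 2) × Fin d) ((Fin n → Fin 2) × Fin d) ℂ) (u, b) (v, c) := by
      rw [hFF]
    rw [Matrix.mul_apply, Matrix.one_apply] at h2
    simp only [Matrix.conjTranspose_apply] at h2
    exact h2
  simp only [Matrix.sum_apply, Matrix.mul_apply, Matrix.conjTranspose_apply, kraus,
    Matrix.of_apply, star_sum, star_mul', Finset.sum_mul, Finset.mul_sum]
  refine Eq.trans (sum4_comm (M := ℂ) _) ?_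
  have main : ∀ b c : Fin d,
      (∑ x : Fin n → Fin 2, ∑ a : Fin d,
          star (F (x, a) (u, b)) * star (e b) * (F (x, a) (v, c) * e c))
        = star (e b) * e c * (if (u, b) = (v, c) then 1 else 0) := by
    intro b c
    rw [← key b c, Fintype.sum_prod_type, Finset.mul_sum]
    refine Finset.sum_congr rfl fun x _ => ?_
    rw [Finset.mul_sum]
    refine Finset.sum_congr rfl fun a _ => ?_
    ring
  rw [show (∑ b : Fin d, ∑ c : Fin d, ∑ x : Fin n → Fin 2, ∑ a : Fin d,
        star (F (x, a) (u, b)) * star (e b) * (F (x, a) (v, c) * e c))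
      = ∑ b : Fin d, ∑ c : Fin d, star (e b) * e c * (if (u, b) = (v, c) then 1 else 0) from
    Finset.sum_congr rfl fun b _ => Finset.sum_congr rfl fun c _ => main b c]
  rw [Matrix.one_apply]
  by_cases huv : u = v
  · subst huv
    simp only [Prod.mk.injEq, true_and, if_pos rfl, mul_ite, mul_one, mul_zero]
    rw [Finset.sum_comm]
    simp only [Finset.sum_ite_eq, Finset.mem_univ, if_pos]
    simpa [dotProduct] using he
  · simp [Prod.ext_iff, huv]

/-- **Core of Lemma 1.** The Pauli twirl of any channel given by a unitary dilation
is a Pauli channel: there exist probabilities `c g` with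
`(1/4^n) ∑_f P_f Λ(P_f ρ P_f) P_f = ∑_g c g • (P_g ρ P_g)` for all `ρ`. -/
theorem pauli_twirl_of_dilated_channel (n d : ℕ) (hn : 1 ≤ n) (hd : 1 ≤ d)
    (F : Matrix ((Fin n → Fin 2) × Fin d) ((Fin n → Fin 2) × Fin d) ℂ)
    (hF : F ∈ Matrix.unitaryGroup ((Fin n → Fin 2) × Fin d) ℂ)
    (e : Fin d → ℂ) (he : dotProduct (star e) e = 1) :
    ∃ c : (Fin n → Fin 4) → ℝ,
      (∀ g, 0 ≤ c g) ∧ (∑ g, c g = 1) ∧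
        ∀ ρ : Matrix (Fin n → Fin 2) (Fin n → Fin 2) ℂ,
          (1 / 4 ^ n : ℂ) • ∑ f : Fin n → Fin 4,
              PauliString n f *
                noiseChannel n d F e (PauliString n f * ρ * PauliString n f) *
                PauliString n f
            = ∑ g : Fin n → Fin 4,
                (c g : ℂ) • (PauliString n g * ρ * PauliString n g) := by
  classical
  set K := kraus n d F e with hKdef
  set lam : Fin d → (Fin n → Fin 4) → ℂ := fun a g => (PBasis n).repr (K a) g with hlam
  have hK : ∀ a, K a = ∑ g, lam a g • PauliString n g := fun a => (sum_repr n (K a)).symm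
  have hKH : ∀ a, (K a)ᴴ = ∑ h, star (lam a h) • PauliString n h := by
    intro a
    rw [hK a]
    simp only [Matrix.conjTranspose_sum, Matrix.conjTranspose_smul, P_herm]
  refine ⟨fun g => ∑ a, Complex.normSq (lam a g), fun g => Finset.sum_nonneg fun a _ =>
    Complex.normSq_nonneg _, ?_, ?_⟩
  · -- sum of probabilities is 1
    have h2n : (2 : ℂ) ^ n ≠ 0 := pow_ne_zero _ two_ne_zero
    have htr2 : ∀ a : Fin d, ((K a)ᴴ * K a).trace
        = (2 : ℂ) ^ n * ∑ g, star (lam a g) * lam a g := by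
      intro a
      rw [hKH a, hK a]
      simp only [Finset.sum_mul, Finset.mul_sum, Matrix.smul_mul, Matrix.mul_smul, smul_smul,
        Matrix.trace_sum, Matrix.trace_smul, P_trace_mul, smul_eq_mul, mul_ite, mul_zero]
      refine Finset.sum_congr rfl fun h _ => ?_
      rw [Finset.sum_eq_single h]
      · rw [if_pos rfl]; ring
      · intro g _ hg; rw [if_neg hg]
      · intro hh; exact absurd (Finset.mem_univ h) hh
    have h1 : (∑ a, ((K a)ᴴ * K a).trace) = (2 : ℂ) ^ n := by
      rw [← Matrix.trace_sum, kraus_tp n d F hF e he, Matrix.trace_one]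
      simp [Fintype.card_fun]
    have h2 : (∑ a, ((K a)ᴴ * K a).trace)
        = (2 : ℂ) ^ n * ∑ a, ∑ g, star (lam a g) * lam a g := by
      rw [Finset.mul_sum]
      exact Finset.sum_congr rfl fun a _ => htr2 a
    have hsum1 : ∑ a, ∑ g, star (lam a g) * lam a g = 1 := by
      have := h2.symm.trans h1
      calc ∑ a, ∑ g, star (lam a g) * lam a g
          = (2 : ℂ)^n * (∑ a, ∑ g, star (lam a g) * lam a g) / (2:ℂ)^n := by
            field_simp
        _ = 1 := by rw [this]; field_simp
    have hcast : ((∑ g, ∑ a, Complex.normSq (lam a g) : ℝ) : ℂ)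
        = ∑ a, ∑ g, star (lam a g) * lam a g := by
      rw [Finset.sum_comm]
      push_cast
      refine Finset.sum_congr rfl fun a _ => Finset.sum_congr rfl fun g _ => ?_
      exact Complex.normSq_eq_conj_mul_self
    have := hcast.trans hsum1
    exact_mod_cast this
  · -- the channel identity
    intro ρ
    have key2 : ∀ (f : Fin n → Fin 4) (a : Fin d),
        PauliString n f * (K a * (PauliString n f * ρ * PauliString n f) * (K a)ᴴ) *
            PauliString n f
          = ∑ g, ∑ h, ((lam a g * Eps n f g) * star (lam a h) * Eps n f h) •
              (PauliString n g * ρ * PauliString n h) := by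
      intro f a
      have hQ : PauliString n f * K a * PauliString n f
          = ∑ g, (lam a g * Eps n f g) • PauliString n g := by
        rw [hK a]
        simp only [Finset.mul_sum, Finset.sum_mul, Matrix.mul_smul, Matrix.smul_mul]
        refine Finset.sum_congr rfl fun g _ => ?_
        rw [P_conj, smul_smul]
      have hQH : PauliString n f * (K a)ᴴ * PauliString n f
          = ∑ h, (star (lam a h) * Eps n f h) • PauliString n h := by
        rw [hKH a]
        simp only [Finset.mul_sum, Finset.sum_mul, Matrix.mul_smul, Matrix.smul_mul]
        refine Finset.sum_congr rfl fun h _ => ?_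
        rw [P_conj, smul_smul]
      calc PauliString n f * (K a * (PauliString n f * ρ * PauliString n f) * (K a)ᴴ) *
              PauliString n f
          = (PauliString n f * K a * PauliString n f) * ρ *
              (PauliString n f * (K a)ᴴ * PauliString n f) := by
            simp only [Matrix.mul_assoc]
        _ = (∑ g, (lam a g * Eps n f g) • PauliString n g) * ρ *
              (∑ h, (star (lam a h) * Eps n f h) • PauliString n h) := by rw [hQ, hQH]
        _ = ∑ g, ∑ h, ((lam a g * Eps n f g) * star (lam a h) * Eps n f h) •
              (PauliString n g * ρ * PauliString n h) := by
            simp only [Finset.sum_mul, Finset.mul_sum, Matrix.smul_mul, Matrix.mul_smul,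
              smul_smul]
            refine Eq.trans (Finset.sum_comm) ?_
            refine Finset.sum_congr rfl fun g _ => Finset.sum_congr rfl fun h _ => ?_
            rw [Matrix.mul_assoc]
            congr 1
            ring
    have step1 : ∀ f : Fin n → Fin 4,
        PauliString n f * noiseChannel n d F e (PauliString n f * ρ * PauliString n f) *
            PauliString n f
          = ∑ a, ∑ g, ∑ h, ((lam a g * Eps n f g) * star (lam a h) * Eps n f h) •
              (PauliString n g * ρ * PauliString n h) := by
      intro f
      rw [noiseChannel_eq_kraus]
      simp only [Finset.mul_sum, Finset.sum_mul]
      exact Finset.sum_congr rfl fun a _ => key2 f a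
    rw [show (∑ f : Fin n → Fin 4,
          PauliString n f * noiseChannel n d F e (PauliString n f * ρ * PauliString n f) *
            PauliString n f)
        = ∑ f : Fin n → Fin 4, ∑ a, ∑ g, ∑ h,
            ((lam a g * Eps n f g) * star (lam a h) * Eps n f h) •
              (PauliString n g * ρ * PauliString n h) from
      Finset.sum_congr rfl fun f _ => step1 f]
    rw [sum4_comm (M := Matrix (Fin n → Fin 2) (Fin n → Fin 2) ℂ)
      (fun f a g h => ((lam a g * Eps n f g) * star (lam a h) * Eps n f h) •
        (PauliString n g * ρ * PauliString n h))]
    -- now the sum is ∑ h, ∑ g, ∑ a, ∑ f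
    have inner : ∀ (h g : Fin n → Fin 4) (a : Fin d),
        (∑ f : Fin n → Fin 4, ((lam a g * Eps n f g) * star (lam a h) * Eps n f h) •
            (PauliString n g * ρ * PauliString n h))
          = ((lam a g * star (lam a h)) * (if g = h then (4:ℂ)^n else 0)) •
              (PauliString n g * ρ * PauliString n h) := by
      intro h g a
      rw [← Finset.sum_smul]
      congr 1
      rw [show (∑ f : Fin n → Fin 4, lam a g * Eps n f g * star (lam a h) * Eps n f h)
          = (lam a g * star (lam a h)) * ∑ f : Fin n → Fin 4, Eps n f g * Eps n f h by
        rw [Finset.mul_sum]; exact Finset.sum_congr rfl fun f _ => by ring]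
      rw [Eps_orth]
    rw [show (∑ h : Fin n → Fin 4, ∑ g : Fin n → Fin 4, ∑ a : Fin d,
          ∑ f : Fin n → Fin 4, ((lam a g * Eps n f g) * star (lam a h) * Eps n f h) •
            (PauliString n g * ρ * PauliString n h))
        = ∑ h : Fin n → Fin 4, ∑ g : Fin n → Fin 4, ∑ a : Fin d,
            ((lam a g * star (lam a h)) * (if g = h then (4:ℂ)^n else 0)) •
              (PauliString n g * ρ * PauliString n h) from
      Finset.sum_congr rfl fun h _ => Finset.sum_congr rfl fun g _ =>
        Finset.sum_congr rfl fun a _ => inner h g a]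
    have collapse : ∀ h : Fin n → Fin 4,
        (∑ g : Fin n → Fin 4, ∑ a : Fin d,
            ((lam a g * star (lam a h)) * (if g = h then (4:ℂ)^n else 0)) •
              (PauliString n g * ρ * PauliString n h))
          = ∑ a : Fin d, ((lam a h * star (lam a h)) * (4:ℂ)^n) •
              (PauliString n h * ρ * PauliString n h) := by
      intro h
      rw [Finset.sum_eq_single h]
      · exact Finset.sum_congr rfl fun a _ => by rw [if_pos rfl]
      · intro g _ hg
        refine Finset.sum_eq_zero fun a _ => ?_
        rw [if_neg hg, mul_zero, zero_smul]
      · intro hh; exact absurd (Finset.mem_univ h) hh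
    rw [show (∑ h : Fin n → Fin 4, ∑ g : Fin n → Fin 4, ∑ a : Fin d,
          ((lam a g * star (lam a h)) * (if g = h then (4:ℂ)^n else 0)) •
            (PauliString n g * ρ * PauliString n h))
        = ∑ h : Fin n → Fin 4, ∑ a : Fin d, ((lam a h * star (lam a h)) * (4:ℂ)^n) •
            (PauliString n h * ρ * PauliString n h) from
      Finset.sum_congr rfl fun h _ => collapse h]
    rw [Finset.smul_sum]
    refine Finset.sum_congr rfl fun h _ => ?_
    rw [Finset.smul_sum]
    simp only [smul_smul]
    rw [← Finset.sum_smul]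
    congr 1
    have h4 : (4 : ℂ) ^ n ≠ 0 := pow_ne_zero _ (by norm_num)
    push_cast
    refine Finset.sum_congr rfl fun a _ => ?_
    rw [show lam a h * star (lam a h) = (Complex.normSq (lam a h) : ℂ) from
      Complex.mul_conj _]
    field_simp
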